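/- Let E ⊆ X be a compact subset of a metric space, and suppose Γ = E ∪ ⋃_{j∈J} K_j where each K_j is a compact connected set with K_j ∩ E ≠ ∅ (i.e., each K_j meets E), and for every ε > 0 only finitely many K_j have diameter ≥ ε. Then Γ is compact. -/

import Mathlib

open MeasureTheory Metric Filter Set Topology

/-- If E is compact and Γ = E ∪ ⋃ⱼ Kⱼ where the Kⱼ are compact connected sets
meeting E such that for every ε > 0 only finitely many Kⱼ have diameter ≥ ε,
then Γ is compact. -/
theorem stmt_13 {X : Type*} [MetricSpace X] {J : Type*} [Countable J]
    (E : Set X) (hE : IsCompact E) (K : J → Set X)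
    (hKcomp : ∀ j, IsCompact (K j)) (hKconn : ∀ j, IsConnected (K j))
    (hKE : ∀ j, (K j ∩ E).Nonempty)
    (hfin : ∀ ε : ℝ, 0 < ε → {j | ε ≤ Metric.diam (K j)}.Finite) :
    IsCompact (E ∪ ⋃ j, K j) := by
  rw [isCompact_iff_isSeqCompact]
  intro x hx
  by_cases hA : ∃ᶠ n in atTop, x n ∈ E
  · obtain ⟨φ, hφ, hφE⟩ := Filter.extraction_of_frequently_atTop hA
    obtain ⟨e, he, ψ, hψ, hlim⟩ := hE.isSeqCompact hφE
    exact ⟨e, Or.inl he, φ ∘ ψ, hφ.comp hψ, hlim⟩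
  · have hA' : ∀ᶠ n in atTop, x n ∈ ⋃ j, K j := by
      filter_upwards [not_frequently.mp hA] with n hn
      rcases hx n with h | h
      · exact absurd h hn
      · exact h
    obtain ⟨φ, hφ, hφU⟩ := Filter.extraction_of_eventually_atTop hA'
    choose j hj using fun n => mem_iUnion.mp (hφU n)
    by_cases hB : ∃ j₀, {n | j n = j₀}.Infinite
    · obtain ⟨j₀, hj₀⟩ := hB
      obtain ⟨ψ, hψ, hψj⟩ := Filter.extraction_of_frequently_atTop
        (Nat.frequently_atTop_iff_infinite.mpr hj₀)
      have hmem : ∀ n, x (φ (ψ n)) ∈ K j₀ := fun n => hψj n ▸ hj (ψ n)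
      obtain ⟨a, ha, ρ, hρ, hlim⟩ := (hKcomp j₀).isSeqCompact hmem
      exact ⟨a, Or.inr (mem_iUnion.mpr ⟨j₀, ha⟩), φ ∘ ψ ∘ ρ,
        hφ.comp (hψ.comp hρ), by exact hlim⟩
    · push_neg at hB
      have hdiam : Tendsto (fun n => Metric.diam (K (j n))) atTop (𝓝 0) := by
        rw [Metric.tendsto_nhds]
        intro ε hε
        have hT : {n | ε ≤ Metric.diam (K (j n))}.Finite := by
          apply Set.Finite.subset ((hfin ε hε).biUnion (fun j₀ _ => hB j₀))
          intro n hn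
          exact Set.mem_biUnion hn rfl
        have := hT.eventually_cofinite_notMem
        rw [Nat.cofinite_eq_atTop] at this
        filter_upwards [this] with n hn
        rw [Real.dist_0_eq_abs, abs_of_nonneg Metric.diam_nonneg]
        exact lt_of_not_ge hn
      choose y hyK hyE using fun n => hKE (j n)
      obtain ⟨e, he, ψ, hψ, hlim⟩ := hE.isSeqCompact hyE
      refine ⟨e, Or.inl he, φ ∘ ψ, hφ.comp hψ, ?_⟩
      have hd : Tendsto (fun n => dist (y (ψ n)) (x (φ (ψ n)))) atTop (𝓝 0) := by
        refine squeeze_zero (fun n => dist_nonneg) (fun n => ?_)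
          (hdiam.comp hψ.tendsto_atTop)
        exact Metric.dist_le_diam_of_mem (hKcomp _).isBounded (hyK (ψ n)) (hj (ψ n))
      exact hlim.congr_dist hd
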